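/- arXiv:1108.0123 — 2 statements merged into one kernel-verified Lean document; each statement's English description precedes it below -/
import Mathlib

section
/- If an independent set F of nodes all of degree at most 3 is eliminated from a graph G by replacing each F-node with a clique on its neighbors, the total number of edges does not increase: eliminating a degree-1 or degree-2 node decreases the edge count by at least 1, and eliminating a degree-3 node increases it by at most 0. -/
open Classical SimpleGraph

def elimGraph {V : Type*} (G : SimpleGraph V) (F : Set V) : SimpleGraph V where
  Adj v w := v ∉ F ∧ w ∉ F ∧ v ≠ w ∧
    (G.Adj v w ∨ ∃ u ∈ F, G.Adj u v ∧ G.Adj u w)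
  symm := by
    constructor
    rintro v w ⟨hv, hw, hne, h⟩
    refine ⟨hw, hv, hne.symm, ?_⟩
    rcases h with h | ⟨u, hu, h1, h2⟩
    · exact Or.inl h.symm
    · exact Or.inr ⟨u, hu, h2, h1⟩
  loopless := by constructor; rintro v ⟨_, _, hne, _⟩; exact hne rfl

open Finset in
lemma offdiag_sym2_card {V : Type*} [DecidableEq V] (s : Finset V) :
    (s.sym2.filter (fun e => ¬ e.IsDiag)).card = Nat.choose s.card 2 := by
  have hdiag : s.sym2.filter (fun e => e.IsDiag) = s.image Sym2.diag := by
    ext e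
    induction e with
    | _ a b =>
      simp only [mem_filter, mk_mem_sym2_iff, Sym2.mk_isDiag_iff, mem_image]
      constructor
      · rintro ⟨⟨ha, hb⟩, rfl⟩; exact ⟨a, ha, rfl⟩
      · rintro ⟨c, hc, h⟩
        have := Sym2.eq_iff.mp h
        rcases this with ⟨rfl, rfl⟩ | ⟨rfl, rfl⟩ <;> exact ⟨⟨hc, hc⟩, rfl⟩
  have h1 := Finset.card_filter_add_card_filter_not
    (s := s.sym2) (p := fun e => e.IsDiag)
  rw [hdiag, Finset.card_image_of_injective _ Sym2.diag_injective,
    Finset.card_sym2] at h1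
  have h2 : (s.card + 1).choose 2 = s.card.choose 1 + s.card.choose 2 :=
    Nat.choose_succ_succ _ _
  rw [Nat.choose_one_right] at h2
  omega

open Finset in
lemma elim_key {V : Type*} [Fintype V] [DecidableEq V]
    (G : SimpleGraph V) [DecidableRel G.Adj] (F : Set V)
    (hInd : ∀ u ∈ F, ∀ v ∈ F, ¬G.Adj u v) :
    (elimGraph G F).edgeSet.ncard + ∑ u ∈ F.toFinset, G.degree u ≤
      G.edgeSet.ncard + ∑ u ∈ F.toFinset, Nat.choose (G.degree u) 2 := by
  classical
  have hGE : G.edgeSet.ncard = G.edgeFinset.card := Set.ncard_eq_toFinset_card' _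
  have hEE : (elimGraph G F).edgeSet.ncard = (elimGraph G F).edgeFinset.card :=
    Set.ncard_eq_toFinset_card' _
  rw [hGE, hEE]
  set E := G.edgeFinset with hE
  set FS := F.toFinset with hFS
  have hmemFS : ∀ u, u ∈ FS ↔ u ∈ F := fun u => Set.mem_toFinset
  set E0 := E.filter (fun e => ∀ x ∈ e, x ∉ F) with hE0
  set B := FS.biUnion (fun u => G.incidenceFinset u) with hB
  -- lower bound on E.card
  have hsub : E0 ∪ B ⊆ E := by
    apply Finset.union_subset (Finset.filter_subset _ _)
    intro e he
    rw [Finset.mem_biUnion] at he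
    obtain ⟨u, _, he⟩ := he
    rw [mem_incidenceFinset] at he
    exact mem_edgeFinset.mpr (G.incidenceSet_subset u he)
  have hdisj : Disjoint E0 B := by
    rw [Finset.disjoint_left]
    intro e he0 heB
    rw [Finset.mem_biUnion] at heB
    obtain ⟨u, hu, he⟩ := heB
    rw [mem_incidenceFinset] at he
    exact (Finset.mem_filter.mp he0).2 u he.2 ((hmemFS u).mp hu)
  have hBcard : B.card = ∑ u ∈ FS, G.degree u := by
    rw [hB, Finset.card_biUnion]
    · exact Finset.sum_congr rfl fun u _ => by simp
    · intro u hu v hv huv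
      rw [Function.onFun, Finset.disjoint_left]
      intro e heu hev
      rw [mem_incidenceFinset] at heu hev
      have hin : u ∈ e ∧ v ∈ e := ⟨heu.2, hev.2⟩
      rw [Sym2.mem_and_mem_iff huv] at hin
      subst hin
      exact hInd u ((hmemFS u).mp hu) v ((hmemFS v).mp hv)
        (G.mem_edgeSet.mp heu.1)
  have hlow : E0.card + ∑ u ∈ FS, G.degree u ≤ E.card := by
    have := Finset.card_le_card hsub
    rwa [Finset.card_union_of_disjoint hdisj, hBcard] at this
  -- upper bound on elim
  set P : V → Finset (Sym2 V) :=
    fun u => (G.neighborFinset u).sym2.filter (fun e => ¬ e.IsDiag) with hP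
  have hup : (elimGraph G F).edgeFinset ⊆ E0 ∪ FS.biUnion P := by
    intro e he
    rw [mem_edgeFinset] at he
    induction e with
    | _ v w =>
      rw [SimpleGraph.mem_edgeSet] at he
      obtain ⟨hv, hw, hne, h⟩ := he
      rcases h with h | ⟨u, hu, h1, h2⟩
      · apply Finset.mem_union_left
        rw [hE0, Finset.mem_filter]
        refine ⟨mem_edgeFinset.mpr (G.mem_edgeSet.mpr h), ?_⟩
        intro x hx
        rw [Sym2.mem_iff] at hx
        rcases hx with rfl | rfl
        · exact hv
        · exact hw
      · apply Finset.mem_union_right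
        rw [Finset.mem_biUnion]
        refine ⟨u, (hmemFS u).mpr hu, ?_⟩
        rw [hP, Finset.mem_filter, Finset.mk_mem_sym2_iff]
        refine ⟨⟨?_, ?_⟩, ?_⟩
        · exact (G.mem_neighborFinset u v).mpr h1
        · exact (G.mem_neighborFinset u w).mpr h2
        · rw [Sym2.mk_isDiag_iff]; exact hne
  have hPcard : ∀ u, (P u).card = Nat.choose (G.degree u) 2 := by
    intro u
    rw [hP]
    rw [offdiag_sym2_card, G.card_neighborFinset_eq_degree]
  have hupper : (elimGraph G F).edgeFinset.card ≤
      E0.card + ∑ u ∈ FS, Nat.choose (G.degree u) 2 := by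
    calc (elimGraph G F).edgeFinset.card ≤ (E0 ∪ FS.biUnion P).card :=
          Finset.card_le_card hup
      _ ≤ E0.card + (FS.biUnion P).card := Finset.card_union_le _ _
      _ ≤ E0.card + ∑ u ∈ FS, (P u).card :=
          Nat.add_le_add_left (Finset.card_biUnion_le) _
      _ = E0.card + ∑ u ∈ FS, Nat.choose (G.degree u) 2 := by
          rw [Finset.sum_congr rfl fun u _ => hPcard u]
  omega

/-- Eliminating an independent set of nodes of degree at most 3 does not increase the
edge count; eliminating a single node of degree 1 or 2 decreases it by at least 1, and
eliminating a single node of degree 3 does not increase it. -/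
theorem low_degree_elimination_edge_count
    (V : Type*) [Fintype V] [DecidableEq V]
    (G : SimpleGraph V) [DecidableRel G.Adj] :
    (∀ F : Set V,
      (∀ u ∈ F, ∀ v ∈ F, ¬G.Adj u v) →
      (∀ u ∈ F, G.degree u ≤ 3) →
      (elimGraph G F).edgeSet.ncard ≤ G.edgeSet.ncard) ∧
    (∀ u : V, 1 ≤ G.degree u → G.degree u ≤ 2 →
      (elimGraph G {u}).edgeSet.ncard + 1 ≤ G.edgeSet.ncard) ∧
    (∀ u : V, G.degree u = 3 →
      (elimGraph G {u}).edgeSet.ncard ≤ G.edgeSet.ncard) := by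
  refine ⟨?_, ?_, ?_⟩
  · intro F hInd hdeg
    have key := elim_key G F hInd
    have hle : ∑ u ∈ F.toFinset, Nat.choose (G.degree u) 2 ≤
        ∑ u ∈ F.toFinset, G.degree u := by
      apply Finset.sum_le_sum
      intro u hu
      have := hdeg u (Set.mem_toFinset.mp hu)
      interval_cases h : G.degree u <;> simp
    omega
  · intro u h1 h2
    have key := elim_key G {u} (by
      rintro a rfl b rfl hab
      exact G.irrefl hab)
    rw [Set.toFinset_singleton, Finset.sum_singleton, Finset.sum_singleton] at key
    interval_cases h : G.degree u <;> simp at key <;> omega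
  · intro u h3
    have key := elim_key G {u} (by
      rintro a rfl b rfl hab
      exact G.irrefl hab)
    rw [Set.toFinset_singleton, Finset.sum_singleton, Finset.sum_singleton, h3] at key
    norm_num at key
    omega
end

section
/- Let A be the Laplacian of a connected graph (positive weights), U the all-ones vector, and consider the augmented (n+1)×(n+1) matrix [[A, U],[U^T, 0]]. This augmented matrix is invertible. -/
open Finset Matrix

/-- For the Laplacian `A` of a connected positively weighted graph and the all-ones
column `U`, the augmented matrix `[[A, U],[Uᵀ, 0]]` is invertible. -/
theorem augmented_laplacian_invertible
    (n : ℕ) (G : SimpleGraph (Fin n)) (w : Fin n → Fin n → ℝ)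
    (hconn : G.Connected)
    (hsymm : ∀ u v, w u v = w v u)
    (hpos : ∀ u v, G.Adj u v → 0 < w u v)
    (hzero : ∀ u v, ¬G.Adj u v → w u v = 0)
    (A : Matrix (Fin n) (Fin n) ℝ)
    (hA : ∀ u v, A u v = if u = v then ∑ s, w u s else -(w u v))
    (U : Matrix (Fin n) (Fin 1) ℝ) (hU : ∀ u i, U u i = 1) :
    IsUnit (Matrix.fromBlocks A U Uᵀ (0 : Matrix (Fin 1) (Fin 1) ℝ)) := by
  have hn : 0 < n := Fin.pos_iff_nonempty.mpr hconn.nonempty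
  have hwnn : ∀ u v, 0 ≤ w u v := by
    intro u v
    by_cases h : G.Adj u v
    · exact (hpos u v h).le
    · exact (hzero u v h).ge
  have hwuu : ∀ u, w u u = 0 := fun u => hzero u u (G.irrefl)
  rw [Matrix.isUnit_iff_isUnit_det, isUnit_iff_ne_zero]
  intro hdet
  obtain ⟨x, hx0, hx⟩ := Matrix.exists_mulVec_eq_zero_iff.mpr hdet
  set y : Fin n → ℝ := fun u => x (Sum.inl u) with hy
  set c : ℝ := x (Sum.inr 0) with hc
  -- row equations for the top block
  have hrow : ∀ u : Fin n, (∑ v, A u v * y v) + c = 0 := by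
    intro u
    have h := congrFun hx (Sum.inl u)
    simpa [Matrix.mulVec, dotProduct, Fintype.sum_sum_type, hU, hy, hc,
      Fin.sum_univ_one] using h
  -- bottom row: sum of y is 0
  have hsum : (∑ v, y v) = 0 := by
    have h := congrFun hx (Sum.inr 0)
    simpa [Matrix.mulVec, dotProduct, Fintype.sum_sum_type, hU, hy] using h
  -- each row of A sums to zero
  have hArow : ∀ u, (∑ v, A u v) = 0 := by
    intro u
    have h : ∀ v, A u v = (if u = v then (∑ s, w u s) + w u v else 0) - w u v := by
      intro v; rw [hA]; by_cases h : u = v <;> simp [h]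
    simp only [h, Finset.sum_sub_distrib, Finset.sum_ite_eq, Finset.mem_univ,
      if_true]
    simp [hwuu u]
  -- rewrite rows using weights
  have hrow' : ∀ u, (∑ v, w u v * (y u - y v)) = -c := by
    intro u
    have key : (∑ v, w u v * (y u - y v))
        = (∑ v, A u v * y v) - (∑ v, A u v) * y u := by
      rw [Finset.sum_mul, ← Finset.sum_sub_distrib]
      refine Finset.sum_congr rfl fun v _ => ?_
      rw [hA u v]
      by_cases h : u = v
      · subst h; simp [hwuu]
      · simp only [h, if_false]; ring
    rw [key, hArow u, zero_mul, sub_zero]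
    linarith [hrow u]
  -- quadratic form vanishes
  have hQ1 : (∑ u, ∑ v, w u v * (y u * (y u - y v))) = 0 := by
    have h : ∀ u, (∑ v, w u v * (y u * (y u - y v))) = y u * -c := by
      intro u
      rw [← hrow' u, Finset.mul_sum]
      exact Finset.sum_congr rfl fun v _ => by ring
    calc (∑ u, ∑ v, w u v * (y u * (y u - y v))) = ∑ u, y u * -c :=
          Finset.sum_congr rfl fun u _ => h u
      _ = (∑ u, y u) * -c := by rw [Finset.sum_mul]
      _ = 0 := by rw [hsum, zero_mul]
  have hswap : (∑ u, ∑ v, w u v * (y v * (y u - y v)))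
      = -(∑ u, ∑ v, w u v * (y u * (y u - y v))) := by
    rw [Finset.sum_comm, ← Finset.sum_neg_distrib]
    refine Finset.sum_congr rfl fun a _ => ?_
    rw [← Finset.sum_neg_distrib]
    refine Finset.sum_congr rfl fun b _ => ?_
    rw [hsymm b a]; ring
  have hE : (∑ u, ∑ v, w u v * (y u - y v) ^ 2) = 0 := by
    have expand : (∑ u, ∑ v, w u v * (y u - y v) ^ 2)
        = (∑ u, ∑ v, w u v * (y u * (y u - y v)))
          - (∑ u, ∑ v, w u v * (y v * (y u - y v))) := by
      rw [← Finset.sum_sub_distrib]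
      refine Finset.sum_congr rfl fun u _ => ?_
      rw [← Finset.sum_sub_distrib]
      exact Finset.sum_congr rfl fun v _ => by ring
    rw [expand, hswap, hQ1]; ring
  -- each term is zero
  have hterm : ∀ u v, w u v * (y u - y v) ^ 2 = 0 := by
    have houter := (Finset.sum_eq_zero_iff_of_nonneg (fun u _ =>
      Finset.sum_nonneg fun v _ => mul_nonneg (hwnn u v) (sq_nonneg _))).mp hE
    intro u v
    have hinner := (Finset.sum_eq_zero_iff_of_nonneg (fun v _ =>
      mul_nonneg (hwnn u v) (sq_nonneg _))).mp (houter u (Finset.mem_univ u))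
    exact hinner v (Finset.mem_univ v)
  have hadj : ∀ u v, G.Adj u v → y u = y v := by
    intro u v h
    have ht := hterm u v
    rcases mul_eq_zero.mp ht with h' | h'
    · exact absurd h' (ne_of_gt (hpos u v h))
    · have := sq_eq_zero_iff.mp h'
      linarith [sub_eq_zero.mp this]
  -- y is constant on the connected graph
  have hconst : ∀ u v, y u = y v := by
    intro u v
    obtain ⟨p⟩ := hconn u v
    induction p with
    | nil => rfl
    | cons h p ih => exact (hadj _ _ h).trans ih
  set u0 : Fin n := ⟨0, hn⟩ with hu0
  have hsum2 : (∑ v : Fin n, y v) = n * y u0 := by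
    rw [Finset.sum_congr rfl fun v _ => hconst v u0, Finset.sum_const,
      Finset.card_univ, Fintype.card_fin, nsmul_eq_mul]
  have hyu0 : y u0 = 0 := by
    have h : (n : ℝ) * y u0 = 0 := by rw [← hsum2]; exact hsum
    rcases mul_eq_zero.mp h with h' | h'
    · exact absurd h' (Nat.cast_ne_zero.mpr hn.ne')
    · exact h'
  have hyall : ∀ v, y v = 0 := fun v => (hconst v u0).trans hyu0
  have hc0 : c = 0 := by
    have h := hrow' u0
    simp [hyall] at h
    linarith
  apply hx0
  funext i
  simp only [Pi.zero_apply]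
  cases i with
  | inl u => exact hyall u
  | inr j =>
    have hj : j = 0 := Subsingleton.elim j 0
    rw [hj]
    exact hc0
end
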